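/- Let E be an order-continuous Banach lattice and let μ be a locally finite Borel measure on ℝ^d. Then for every simple function f: ℝ^d → E, the non-dyadic lattice Hardy–Littlewood maximal function M̃^μ f(x) := sup_Q ⟨|f|⟩^μ_Q 1_Q(x), where the supremum is taken in the lattice sense over all axis-parallel cubes Q ⊆ ℝ^d, exists for μ-almost every x and defines a strongly μ-measurable function, i.e. M̃^μ f ∈ L^0(μ;E). -/

import Mathlib

open MeasureTheory ENNReal Set

attribute [local instance] Classical.propDecidable

/-- A dyadic cube in `ℝ^d`, given by a generation `k : ℤ` and a position `m : Fin d → ℤ`;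
its underlying set is `∏_i [2^k m i, 2^k (m i + 1))`. -/
structure DyadicCube (d : ℕ) where
  k : ℤ
  m : Fin d → ℤ
deriving DecidableEq

/-- The underlying set of a dyadic cube. -/
def DyadicCube.set {d : ℕ} (Q : DyadicCube d) : Set (Fin d → ℝ) :=
  {x | ∀ i, (2 : ℝ) ^ Q.k * Q.m i ≤ x i ∧ x i < (2 : ℝ) ^ Q.k * (Q.m i + 1)}

/-- A (non-dyadic) axis-parallel cube in `ℝ^d`, given by its corner and side length. -/
structure Cube (d : ℕ) where
  c : Fin d → ℝ
  len : ℝ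
  len_pos : 0 < len

/-- The underlying set of an axis-parallel cube. -/
def Cube.set {d : ℕ} (Q : Cube d) : Set (Fin d → ℝ) :=
  {x | ∀ i, Q.c i ≤ x i ∧ x i < Q.c i + Q.len}

/-- The average `⟨f⟩^μ_A = (1/μ(A)) ∫_A f dμ` of a vector-valued function. -/
noncomputable def avg {d : ℕ} {E : Type*} [NormedAddCommGroup E] [NormedSpace ℝ E]
    (μ : Measure (Fin d → ℝ)) (A : Set (Fin d → ℝ)) (f : (Fin d → ℝ) → E) : E :=
  (μ A).toReal⁻¹ • ∫ x in A, f x ∂μ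

/-- The dyadic lattice Hardy–Littlewood maximal operator
`M̃^μ_D f (x) = sup_{Q ∈ D} ⟨|f|⟩^μ_Q 1_Q(x)` (a lattice supremum of finitely many
positive elements, realized as a fold of `⊔` with base point `0`). -/
noncomputable def dyadicMaximal {d : ℕ} {E : Type*} [NormedAddCommGroup E] [Lattice E] [HasSolidNorm E] [IsOrderedAddMonoid E]
    [NormedSpace ℝ E] (μ : Measure (Fin d → ℝ)) (D : Finset (DyadicCube d))
    (f : (Fin d → ℝ) → E) (x : Fin d → ℝ) : E :=
  D.fold (· ⊔ ·) 0 fun Q => Set.indicator Q.set (fun _ => avg μ Q.set fun y => |f y|) x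

/-- A collection of dyadic cubes is sparse (w.r.t. `μ`): each `Q` in the collection carries a
measurable subset `E_Q ⊆ Q` with `μ(Q) ≤ 2 μ(E_Q)`, the subsets being pairwise disjoint. -/
def IsSparse {d : ℕ} (μ : Measure (Fin d → ℝ)) (S : Finset (DyadicCube d)) : Prop :=
  ∃ ES : DyadicCube d → Set (Fin d → ℝ),
    (∀ Q ∈ S, ES Q ⊆ Q.set ∧ MeasurableSet (ES Q) ∧ μ Q.set ≤ 2 * μ (ES Q)) ∧
    (S : Set (DyadicCube d)).Pairwise fun Q Q' => Disjoint (ES Q) (ES Q')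

/-- The sparse operator `A^μ_{q,S} f (x) = (∑_{Q ∈ S} ⟨|f|⟩_Q^q 1_Q(x))^{1/q}` acting on
scalar-valued functions. -/
noncomputable def sparseOp {d : ℕ} (μ : Measure (Fin d → ℝ)) (q : ℝ)
    (S : Finset (DyadicCube d)) (f : (Fin d → ℝ) → ℝ) (x : Fin d → ℝ) : ℝ :=
  (∑ Q ∈ S, Set.indicator Q.set (fun _ => avg μ Q.set (fun y => |f y|) ^ q) x) ^ (1 / q)

/-- `q`-convexity of a Banach lattice with constant `C`:
`‖(∑ |e k|^q)^{1/q}‖ ≤ C (∑ ‖e k‖^q)^{1/q}`. The Krivine element `(∑ |e k|^q)^{1/q}` is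
characterized as the least upper bound of all combinations `∑ a k • |e k|` where the
nonnegative coefficients `a` lie in the unit ball of the norm dual to the `ℓ^q`-norm. -/
def IsQConvexWith (E : Type*) [NormedAddCommGroup E] [Lattice E] [HasSolidNorm E] [IsOrderedAddMonoid E] [NormedSpace ℝ E]
    (q C : ℝ) : Prop :=
  ∀ (n : ℕ) (e : Fin n → E) (s : E),
    IsLUB {x : E | ∃ a : Fin n → ℝ, (∀ k, 0 ≤ a k) ∧
        (∀ t : Fin n → ℝ, (∀ k, 0 ≤ t k) → ∑ k, a k * t k ≤ (∑ k, t k ^ q) ^ (1 / q)) ∧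
        x = ∑ k, a k • |e k|} s →
    ‖s‖ ≤ C * (∑ k, ‖e k‖ ^ q) ^ (1 / q)

/-- The Hardy–Littlewood property of a Banach lattice `E`: for some `p ∈ (1,∞)` the dyadic
lattice maximal operators (w.r.t. Lebesgue measure) are bounded on `L^p(dx; E)` uniformly in
the finite collection of dyadic cubes. -/
def HasHLProperty (d : ℕ) (E : Type*) [NormedAddCommGroup E] [Lattice E] [HasSolidNorm E] [IsOrderedAddMonoid E] [NormedSpace ℝ E] : Prop :=
  ∃ p : ℝ, 1 < p ∧ ∃ C : ℝ, ∀ (D : Finset (DyadicCube d)) (f : (Fin d → ℝ) → E),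
    MemLp f (ENNReal.ofReal p) volume →
    eLpNorm (dyadicMaximal volume D f) (ENNReal.ofReal p) volume ≤
      ENNReal.ofReal C * eLpNorm f (ENNReal.ofReal p) volume

/-- Order continuity of a Banach lattice: every downward directed set with infimum `0`
contains elements of arbitrarily small norm cofinally (i.e. the corresponding decreasing net
converges to `0` in norm). -/
def IsOrderContinuous (E : Type*) [NormedAddCommGroup E] [Lattice E] [HasSolidNorm E] [IsOrderedAddMonoid E] : Prop :=
  ∀ A : Set E, A.Nonempty → DirectedOn (· ≥ ·) A → IsGLB A 0 →
    ∀ ε : ℝ, 0 < ε → ∃ a ∈ A, ∀ b ∈ A, b ≤ a → ‖b‖ < ε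


open Filter Topology

section LatticeAux
variable {E : Type*} [Lattice E] [AddCommGroup E]
  [CovariantClass E E (· + ·) (· ≤ ·)]

lemma inf_add_le_of_nonneg {a b c : E} (ha : 0 ≤ a) (hb : 0 ≤ b) (hc : 0 ≤ c) :
    a ⊓ (b + c) ≤ (a ⊓ b) + (a ⊓ c) := by
  have : (a ⊓ b) + (a ⊓ c) = ((a ⊓ b) + a) ⊓ ((a ⊓ b) + c) := add_inf _ _ _
  rw [this, inf_add, inf_add]
  refine le_inf (le_inf ?_ ?_) (le_inf ?_ ?_)
  · exact inf_le_of_left_le (le_add_of_nonneg_right ha)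
  · exact inf_le_of_left_le (le_add_of_nonneg_left hb)
  · exact inf_le_of_left_le (le_add_of_nonneg_right hc)
  · exact inf_le_right

lemma inf_nsmul_eq_zero {a b : E} (ha : 0 ≤ a) (hb : 0 ≤ b) (hab : a ⊓ b = 0) (n : ℕ) :
    a ⊓ (n • b) = 0 := by
  induction n with
  | zero => simpa using inf_le_right.trans_eq rfl |>.antisymm (le_inf ha le_rfl)
  | succ n ih =>
      refine le_antisymm ?_ (le_inf ha (nsmul_nonneg hb _))
      calc a ⊓ ((n + 1) • b) = a ⊓ (n • b + b) := by rw [succ_nsmul]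
      _ ≤ (a ⊓ (n • b)) + (a ⊓ b) :=
          inf_add_le_of_nonneg ha (nsmul_nonneg hb _) hb
      _ = 0 := by rw [ih, hab, add_zero]

lemma nonneg_of_nsmul_nonneg {a : E} {n : ℕ} (hn : 0 < n) (h : 0 ≤ n • a) : 0 ≤ a := by
  have hp : (0:E) ≤ a⁺ := posPart_nonneg a
  have hq : (0:E) ≤ a⁻ := negPart_nonneg a
  have hpq : a⁺ ⊓ a⁻ = 0 := posPart_inf_negPart_eq_zero a
  have hsub : a⁺ - a⁻ = a := posPart_sub_negPart a
  have h1 : n • a⁻ ≤ n • a⁺ := by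
    have : n • a⁺ - n • a⁻ = n • a := by rw [← smul_sub, hsub]
    have h0 : 0 ≤ n • a⁺ - n • a⁻ := this ▸ h
    exact sub_nonneg.mp h0
  have h2 : a⁻ ≤ n • a⁺ := by
    refine le_trans ?_ h1
    calc a⁻ = 1 • a⁻ := (one_smul ℕ _).symm
    _ ≤ n • a⁻ := nsmul_le_nsmul_left hq hn
  have h3 : a⁻ = 0 := by
    have := inf_nsmul_eq_zero hq hp (by rw [inf_comm, hpq]) n
    rw [inf_eq_left.mpr h2] at this
    exact this
  have h4 : (0:E) ≤ a⁺ - a⁻ := by rw [h3, sub_zero]; exact hp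
  exact hsub ▸ h4

end LatticeAux

section SmulAux
variable {E : Type*} [NormedAddCommGroup E] [Lattice E] [HasSolidNorm E] [IsOrderedAddMonoid E] [NormedSpace ℝ E]

lemma real_smul_nonneg {c : ℝ} (hc : 0 ≤ c) {z : E} (hz : 0 ≤ z) : 0 ≤ c • z := by
  have hrat : ∀ q : ℚ, 0 ≤ q → 0 ≤ (q : ℝ) • z := by
    intro q hq
    have hden : 0 < q.den := q.pos
    apply nonneg_of_nsmul_nonneg hden
    have : q.den • ((q : ℝ) • z) = ((q.den : ℝ) * (q : ℝ)) • z := by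
      rw [← Nat.cast_smul_eq_nsmul ℝ, smul_smul]
    rw [this]
    have hnum : ((q.den : ℝ) * (q : ℝ)) = (q.num : ℝ) := by
      rw [Rat.cast_def]
      field_simp
    rw [hnum]
    have hnn : 0 ≤ q.num := Rat.num_nonneg.mpr hq
    obtain ⟨m, hm⟩ := Int.eq_ofNat_of_zero_le hnn
    rw [hm]
    push_cast
    rw [Nat.cast_smul_eq_nsmul ℝ]
    exact nsmul_nonneg hz m
  -- approximate c by rationals from above
  have hseq : ∀ k : ℕ, ∃ q : ℚ, c < (q:ℝ) ∧ (q:ℝ) < c + 1/(k+1) := by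
    intro k
    exact_mod_cast exists_rat_btwn (lt_add_of_pos_right c (by positivity : (0:ℝ) < 1/((k:ℝ)+1)))
  choose q hq1 hq2 using hseq
  have htend : Filter.Tendsto (fun k : ℕ => ((q k : ℝ))) Filter.atTop (nhds c) := by
    have h1 : Filter.Tendsto (fun k : ℕ => c + 1/((k:ℝ)+1)) Filter.atTop (nhds (c + 0)) :=
      Filter.Tendsto.const_add c (tendsto_one_div_add_atTop_nhds_zero_nat)
    rw [add_zero] at h1
    exact tendsto_of_tendsto_of_tendsto_of_le_of_le tendsto_const_nhds h1
      (fun k => (hq1 k).le) (fun k => (hq2 k).le)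
  have htend2 : Filter.Tendsto (fun k : ℕ => ((q k : ℝ)) • z) Filter.atTop (nhds (c • z)) :=
    htend.smul_const z
  exact ge_of_tendsto htend2 (Filter.Eventually.of_forall fun k =>
    hrat (q k) (by exact_mod_cast (hc.trans (hq1 k).le)))

lemma real_smul_le_smul_right {c c' : ℝ} (h : c ≤ c') {z : E} (hz : 0 ≤ z) :
    c • z ≤ c' • z := by
  have := real_smul_nonneg (sub_nonneg.mpr h) hz
  rw [sub_smul] at this
  exact sub_nonneg.mp this

lemma real_smul_le_smul_left {c : ℝ} (hc : 0 ≤ c) {z w : E} (h : z ≤ w) :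
    c • z ≤ c • w := by
  have := real_smul_nonneg hc (sub_nonneg.mpr h)
  rw [smul_sub] at this
  exact sub_nonneg.mp this

end SmulAux

section MonoConv
variable {E : Type*} [NormedAddCommGroup E] [Lattice E] [HasSolidNorm E] [IsOrderedAddMonoid E] [NormedSpace ℝ E] [CompleteSpace E]

lemma tendsto_of_monotone_of_bounded (hOC : IsOrderContinuous E)
    {s : ℕ → E} (hs : Monotone s) {u : E} (hu : ∀ n, s n ≤ u) :
    ∃ l, Filter.Tendsto s Filter.atTop (nhds l) := by
  set U := upperBounds (Set.range s) with hU
  have huU : u ∈ U := fun x ⟨n, hn⟩ => hn ▸ hu n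
  set B := {x : E | ∃ v ∈ U, ∃ n : ℕ, x = v - s n} with hB
  have hBne : B.Nonempty := ⟨u - s 0, u, huU, 0, rfl⟩
  have hdir : DirectedOn (· ≥ ·) B := by
    rintro x ⟨v, hv, nx, rfl⟩ y ⟨w, hw, ny, rfl⟩
    refine ⟨(v ⊓ w) - s (max nx ny), ⟨v ⊓ w, ?_, max nx ny, rfl⟩, ?_, ?_⟩
    · exact fun z hz => le_inf (hv hz) (hw hz)
    · exact sub_le_sub inf_le_left (hs (le_max_left _ _))
    · exact sub_le_sub inf_le_right (hs (le_max_right _ _))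
  have hglb : IsGLB B 0 := by
    constructor
    · rintro x ⟨v, hv, n, rfl⟩
      exact sub_nonneg.mpr (hv ⟨n, rfl⟩)
    · intro b hb
      -- b is a lower bound of B; show b ≤ 0
      have hstep : ∀ v ∈ U, v - b ∈ U := by
        intro v hv
        rintro x ⟨m, rfl⟩
        have h1 : b ≤ v - s m := hb ⟨v, hv, m, rfl⟩
        have h2 : s m + b ≤ s m + (v - s m) := add_le_add_right h1 _
        have h3 : s m + (v - s m) = v := by abel
        rw [h3] at h2
        exact le_sub_iff_add_le.mpr h2
      have hiter : ∀ k : ℕ, u - k • b ∈ U := by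
        intro k
        induction k with
        | zero => simpa using huU
        | succ k ih =>
            have := hstep _ ih
            have heq : u - k • b - b = u - (k+1) • b := by
              rw [succ_nsmul, sub_sub]
            rwa [heq] at this
      have hkb : ∀ k : ℕ, (k + 1) • b ≤ u - s 0 := by
        intro k
        have h1 : b ≤ (u - k • b) - s 0 := hb ⟨u - k • b, hiter k, 0, rfl⟩
        have : k • b + b ≤ k • b + ((u - k • b) - s 0) := add_le_add_right h1 _
        rw [succ_nsmul]
        calc k • b + b ≤ k • b + ((u - k • b) - s 0) := this
        _ = u - s 0 := by abel
      have hb0 : ∀ k : ℕ, b ≤ (((k:ℝ) + 1))⁻¹ • (u - s 0) := by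
        intro k
        have hpos : (0:ℝ) < (k:ℝ) + 1 := by positivity
        have h2 := real_smul_le_smul_left (le_of_lt (inv_pos.mpr hpos))
          (by exact_mod_cast hkb k : ((k+1) : ℕ) • b ≤ u - s 0)
        have h3 : (((k:ℝ)+1))⁻¹ • (((k+1):ℕ) • b) = b := by
          rw [← Nat.cast_smul_eq_nsmul ℝ, smul_smul]
          push_cast
          rw [inv_mul_cancel₀ (by positivity), one_smul]
        rwa [h3] at h2
      have htend : Filter.Tendsto (fun k : ℕ => (((k:ℝ) + 1))⁻¹ • (u - s 0))
          Filter.atTop (nhds ((0:ℝ) • (u - s 0))) := by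
        apply Filter.Tendsto.smul_const
        have := tendsto_one_div_add_atTop_nhds_zero_nat (𝕜 := ℝ)
        simpa [one_div] using this
      rw [zero_smul] at htend
      exact ge_of_tendsto htend (Filter.Eventually.of_forall hb0)
  -- Cauchy
  have hcauchy : CauchySeq s := by
    rw [Metric.cauchySeq_iff']
    intro ε hε
    obtain ⟨a, ⟨v, hv, N, rfl⟩, ha⟩ := hOC B hBne hdir hglb ε hε
    refine ⟨N, fun n hn => ?_⟩
    have h1 : v - s n ∈ B := ⟨v, hv, n, rfl⟩
    have h2 : v - s n ≤ v - s N := sub_le_sub_left (hs hn) v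
    have h3 : ‖v - s N‖ < ε := ha _ ⟨v, hv, N, rfl⟩ le_rfl
    have h4 : 0 ≤ s n - s N := sub_nonneg.mpr (hs hn)
    have h5 : s n - s N ≤ v - s N := sub_le_sub_right (hv ⟨n, rfl⟩) _
    have h6 : ‖s n - s N‖ ≤ ‖v - s N‖ := by
      apply norm_le_norm_of_abs_le_abs
      rw [abs_of_nonneg h4, abs_of_nonneg (h4.trans h5)]
      exact h5
    rw [dist_eq_norm]
    exact lt_of_le_of_lt h6 h3
  exact cauchySeq_tendsto_of_complete hcauchy

end MonoConv

lemma measure_inter_tendsto {α : Type*} [MeasurableSpace α] (μ : Measure α)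
    {W : ℕ → Set α} {Q : Set α} (hWfin : ∀ m, μ (W m) ≠ ∞) (hQfin : μ Q ≠ ∞)
    (h1 : Tendsto (fun m => μ (W m \ Q)) atTop (𝓝 0))
    (h2 : Tendsto (fun m => μ (Q \ W m)) atTop (𝓝 0))
    (X : Set α) :
    Tendsto (fun m => (μ (X ∩ W m)).toReal) atTop (𝓝 ((μ (X ∩ Q)).toReal)) := by
  have hWQfin : ∀ m, μ (W m \ Q) ≠ ∞ := fun m =>
    ((measure_mono (Set.diff_subset)).trans_lt (hWfin m).lt_top).ne
  have hQWfin : ∀ m, μ (Q \ W m) ≠ ∞ := fun m =>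
    ((measure_mono (Set.diff_subset)).trans_lt hQfin.lt_top).ne
  have hXW : ∀ m, μ (X ∩ W m) ≠ ∞ := fun m =>
    ((measure_mono (Set.inter_subset_right)).trans_lt (hWfin m).lt_top).ne
  have hXQ : μ (X ∩ Q) ≠ ∞ :=
    ((measure_mono (Set.inter_subset_right)).trans_lt hQfin.lt_top).ne
  have hup : ∀ m, (μ (X ∩ W m)).toReal ≤ (μ (X ∩ Q)).toReal + (μ (W m \ Q)).toReal := by
    intro m
    have hsub : X ∩ W m ⊆ (X ∩ Q) ∪ (W m \ Q) := by
      intro x ⟨hx1, hx2⟩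
      by_cases h : x ∈ Q
      · exact Or.inl ⟨hx1, h⟩
      · exact Or.inr ⟨hx2, h⟩
    calc (μ (X ∩ W m)).toReal ≤ (μ ((X ∩ Q) ∪ (W m \ Q))).toReal := by
          apply ENNReal.toReal_mono _ (measure_mono hsub)
          exact (lt_of_le_of_lt (measure_union_le _ _)
            (ENNReal.add_lt_top.mpr ⟨hXQ.lt_top, (hWQfin m).lt_top⟩)).ne
    _ ≤ ((μ (X ∩ Q)) + μ (W m \ Q)).toReal := by
          apply ENNReal.toReal_mono _ (measure_union_le _ _)
          exact (ENNReal.add_lt_top.mpr ⟨hXQ.lt_top, (hWQfin m).lt_top⟩).ne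
    _ = (μ (X ∩ Q)).toReal + (μ (W m \ Q)).toReal := ENNReal.toReal_add hXQ (hWQfin m)
  have hdown : ∀ m, (μ (X ∩ Q)).toReal - (μ (Q \ W m)).toReal ≤ (μ (X ∩ W m)).toReal := by
    intro m
    have hsub : X ∩ Q ⊆ (X ∩ W m) ∪ (Q \ W m) := by
      intro x ⟨hx1, hx2⟩
      by_cases h : x ∈ W m
      · exact Or.inl ⟨hx1, h⟩
      · exact Or.inr ⟨hx2, h⟩
    have : (μ (X ∩ Q)).toReal ≤ (μ (X ∩ W m)).toReal + (μ (Q \ W m)).toReal := by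
      calc (μ (X ∩ Q)).toReal ≤ ((μ (X ∩ W m)) + μ (Q \ W m)).toReal := by
            apply ENNReal.toReal_mono _ ((measure_mono hsub).trans (measure_union_le _ _))
            exact (ENNReal.add_lt_top.mpr ⟨(hXW m).lt_top, (hQWfin m).lt_top⟩).ne
      _ = _ := ENNReal.toReal_add (hXW m) (hQWfin m)
    linarith
  have ht1 : Tendsto (fun m => (μ (W m \ Q)).toReal) atTop (𝓝 0) := by
    have := (ENNReal.tendsto_toReal (by simp : (0:ℝ≥0∞) ≠ ∞)).comp h1
    simpa [Function.comp_def] using this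
  have ht2 : Tendsto (fun m => (μ (Q \ W m)).toReal) atTop (𝓝 0) := by
    have := (ENNReal.tendsto_toReal (by simp : (0:ℝ≥0∞) ≠ ∞)).comp h2
    simpa [Function.comp_def] using this
  apply tendsto_of_tendsto_of_tendsto_of_le_of_le
    (g := fun m => (μ (X ∩ Q)).toReal - (μ (Q \ W m)).toReal)
    (h := fun m => (μ (X ∩ Q)).toReal + (μ (W m \ Q)).toReal)
  · simpa using tendsto_const_nhds.sub ht2
  · simpa using tendsto_const_nhds.add ht1
  · exact hdown
  · exact hup

lemma Cube.measurableSet' {d : ℕ} (Q : Cube d) : MeasurableSet Q.set := by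
  have : Q.set = ⋂ i, (fun x : Fin d → ℝ => x i) ⁻¹' (Set.Ico (Q.c i) (Q.c i + Q.len)) := by
    ext x; simp [Cube.set, Set.mem_iInter]
  rw [this]
  exact MeasurableSet.iInter fun i => (measurable_pi_apply i) measurableSet_Ico

lemma one_div_succ_tendsto : Tendsto (fun m : ℕ => 1/((m:ℝ)+1)) atTop (𝓝 0) :=
  tendsto_one_div_add_atTop_nhds_zero_nat

/-- Rational approximation of a cube. -/
lemma cube_rat_approx {d : ℕ} (μ : Measure (Fin d → ℝ)) [IsLocallyFiniteMeasure μ]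
    (Q : Cube d) :
    ∃ (cq : ℕ → Fin d → ℚ) (Lq : ℕ → ℚ),
      (∀ m, 0 < Lq m) ∧
      (∀ x ∈ Q.set, ∀ᶠ m in atTop,
        ∀ i, ((cq m i : ℝ) ≤ x i ∧ x i < (cq m i : ℝ) + (Lq m : ℝ))) ∧
      (Tendsto (fun m => μ ({x | ∀ i, (cq m i : ℝ) ≤ x i ∧ x i < (cq m i : ℝ) + (Lq m : ℝ)}
        \ Q.set)) atTop (𝓝 0)) ∧
      (Tendsto (fun m => μ (Q.set \
        {x | ∀ i, (cq m i : ℝ) ≤ x i ∧ x i < (cq m i : ℝ) + (Lq m : ℝ)})) atTop (𝓝 0)) := by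
  -- choose rational corners and lengths
  have hc : ∀ (m : ℕ) (i : Fin d), ∃ q : ℚ, Q.c i - 1/((m:ℝ)+1) < q ∧ (q:ℝ) < Q.c i := by
    intro m i
    obtain ⟨q, h1, h2⟩ := exists_rat_btwn (show Q.c i - 1/((m:ℝ)+1) < Q.c i by
      have : (0:ℝ) < 1/((m:ℝ)+1) := by positivity
      linarith)
    exact ⟨q, h1, h2⟩
  choose cq hcq1 hcq2 using hc
  have hL : ∀ m : ℕ, ∃ q : ℚ,
      Q.len - min (1/((m:ℝ)+1)) (Q.len/2) < q ∧ (q:ℝ) < Q.len := by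
    intro m
    obtain ⟨q, h1, h2⟩ := exists_rat_btwn
      (show Q.len - min (1/((m:ℝ)+1)) (Q.len/2) < Q.len by
        have h1 : (0:ℝ) < min (1/((m:ℝ)+1)) (Q.len/2) :=
          lt_min (by positivity) (by linarith [Q.len_pos])
        linarith)
    exact ⟨q, h1, h2⟩
  choose Lq hLq1 hLq2 using hL
  have hLpos : ∀ m, 0 < Lq m := by
    intro m
    have h1 : Q.len - min (1/((m:ℝ)+1)) (Q.len/2) ≥ Q.len - Q.len/2 := by
      have := min_le_right (1/((m:ℝ)+1)) (Q.len/2)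
      linarith
    have h2 : (0:ℝ) < Lq m := by
      have := hLq1 m
      have := Q.len_pos
      linarith
    exact_mod_cast h2
  set W : ℕ → Set (Fin d → ℝ) :=
    fun m => {x | ∀ i, (cq m i : ℝ) ≤ x i ∧ x i < (cq m i : ℝ) + (Lq m : ℝ)} with hW
  refine ⟨cq, Lq, hLpos, ?_, ?_, ?_⟩
  · -- eventual membership
    intro x hx
    rw [eventually_all]
    intro i
    have hx1 : Q.c i ≤ x i := (hx i).1
    have hx2 : x i < Q.c i + Q.len := (hx i).2
    have htend : Tendsto (fun m : ℕ => 2/((m:ℝ)+1)) atTop (𝓝 0) := by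
      have := one_div_succ_tendsto.const_mul (2:ℝ)
      simpa [mul_comm, div_eq_mul_inv, one_div, mul_assoc] using this
    have hev : ∀ᶠ m : ℕ in atTop, 2/((m:ℝ)+1) < Q.c i + Q.len - x i :=
      htend.eventually_lt_const (by linarith)
    filter_upwards [hev] with m hm
    constructor
    · exact le_trans (hcq2 m i).le hx1
    · have e1 : (cq m i : ℝ) > Q.c i - 1/((m:ℝ)+1) := hcq1 m i
      have e2 : (Lq m : ℝ) > Q.len - min (1/((m:ℝ)+1)) (Q.len/2) := hLq1 m
      have e3 : min (1/((m:ℝ)+1)) (Q.len/2) ≤ 1/((m:ℝ)+1) := min_le_left _ _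
      have : (cq m i : ℝ) + (Lq m : ℝ) > Q.c i + Q.len - 2/((m:ℝ)+1) := by
        have : 2/((m:ℝ)+1) = 1/((m:ℝ)+1) + 1/((m:ℝ)+1) := by ring
        linarith
      linarith
  · -- W m \ Q.set → 0
    set B : Set (Fin d → ℝ) := Set.Icc (fun i => Q.c i - 1) (fun i => Q.c i + Q.len) with hB
    have hBfin : μ B < ∞ := isCompact_Icc.measure_lt_top
    have hWB : ∀ m, W m ⊆ B := by
      intro m x hx
      constructor
      · intro i
        have h1 := (hx i).1
        have h2 := hcq1 m i
        have h3 : 1/((m:ℝ)+1) ≤ 1 := by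
          rw [div_le_one (by positivity)]
          simp [Nat.cast_nonneg]
        simp only
        linarith
      · intro i
        have h1 := (hx i).2
        have h2 := hcq2 m i
        have h3 := hLq2 m
        simp only
        linarith
    set T : Fin d → ℕ → Set (Fin d → ℝ) := fun i m =>
      B ∩ (fun x : Fin d → ℝ => x i) ⁻¹' (Set.Ico (Q.c i - 1/((m:ℝ)+1)) (Q.c i)) with hT
    have hTmeas : ∀ i m, MeasurableSet (T i m) :=
      fun i m => measurableSet_Icc.inter ((measurable_pi_apply i) measurableSet_Ico)
    have hTanti : ∀ i, Antitone (T i) := by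
      intro i m m' hmm x hx
      refine ⟨hx.1, ?_, hx.2.2⟩
      have h1 := hx.2.1
      have h2 : 1/((m':ℝ)+1) ≤ 1/((m:ℝ)+1) := by
        apply one_div_le_one_div_of_le (by positivity)
        have : (m:ℝ) ≤ (m':ℝ) := by exact_mod_cast hmm
        linarith
      simp only [Set.mem_preimage, Set.mem_Ico] at h1 ⊢
      exact le_trans (by linarith) h1
    have hTempty : ∀ i, (⋂ m, T i m) = ∅ := by
      intro i
      ext x
      simp only [Set.mem_iInter, Set.mem_empty_iff_false, iff_false]
      intro hxall
      have hlt : x i < Q.c i := (hxall 0).2.2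
      have hge : Q.c i ≤ x i := by
        have htt : Tendsto (fun m : ℕ => Q.c i - 1/((m:ℝ)+1)) atTop (𝓝 (Q.c i - 0)) :=
          tendsto_const_nhds.sub one_div_succ_tendsto
        rw [sub_zero] at htt
        exact le_of_tendsto htt (Eventually.of_forall fun m => (hxall m).2.1)
      linarith
    have hTtend : ∀ i, Tendsto (fun m => μ (T i m)) atTop (𝓝 0) := by
      intro i
      have := tendsto_measure_iInter_atTop (μ := μ)
        (fun m => (hTmeas i m).nullMeasurableSet) (hTanti i)
        ⟨0, ((lt_of_le_of_lt (measure_mono Set.inter_subset_left) hBfin)).ne⟩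
      rw [hTempty i] at this
      simpa [Function.comp_def] using this
    have hsub : ∀ m, W m \ Q.set ⊆ ⋃ i, T i m := by
      intro m x hx
      obtain ⟨hxW, hxQ⟩ := hx
      simp only [Cube.set, Set.mem_setOf_eq, not_forall] at hxQ
      obtain ⟨i, hi⟩ := hxQ
      rw [not_and_or] at hi
      rcases hi with hi | hi
      · push_neg at hi
        refine Set.mem_iUnion.mpr ⟨i, hWB m hxW, ?_, hi⟩
        simp only [Set.mem_preimage, Set.mem_Ico]
        exact le_trans (hcq1 m i).le (hxW i).1
      · push_neg at hi
        exfalso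
        have h1 := (hxW i).2
        have h2 := hcq2 m i
        have h3 := hLq2 m
        linarith
    apply tendsto_of_tendsto_of_tendsto_of_le_of_le (g := fun _ => (0:ℝ≥0∞))
      (h := fun m => ∑ i, μ (T i m))
    · exact tendsto_const_nhds
    · have : Tendsto (fun m => ∑ i : Fin d, μ (T i m)) atTop (𝓝 (∑ _i : Fin d, 0)) :=
        tendsto_finset_sum _ (fun i _ => hTtend i)
      simpa using this
    · exact fun m => zero_le
    · exact fun m => le_trans (measure_mono (hsub m)) (measure_iUnion_fintype_le _ _)
  · -- Q.set \ W m → 0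
    set S : Fin d → ℕ → Set (Fin d → ℝ) := fun i m =>
      Q.set ∩ (fun x : Fin d → ℝ => x i) ⁻¹' (Set.Ici (Q.c i + Q.len - 2/((m:ℝ)+1))) with hS
    have hSmeas : ∀ i m, MeasurableSet (S i m) :=
      fun i m => (Cube.measurableSet' Q).inter ((measurable_pi_apply i) measurableSet_Ici)
    have hSanti : ∀ i, Antitone (S i) := by
      intro i m m' hmm x hx
      refine ⟨hx.1, ?_⟩
      have h1 := hx.2
      simp only [Set.mem_preimage, Set.mem_Ici] at h1 ⊢
      have h2 : 2/((m':ℝ)+1) ≤ 2/((m:ℝ)+1) := by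
        apply div_le_div_of_nonneg_left (by norm_num) (by positivity)
        have : (m:ℝ) ≤ (m':ℝ) := by exact_mod_cast hmm
        linarith
      linarith
    have hSempty : ∀ i, (⋂ m, S i m) = ∅ := by
      intro i
      ext x
      simp only [Set.mem_iInter, Set.mem_empty_iff_false, iff_false]
      intro hxall
      have hlt : x i < Q.c i + Q.len := ((hxall 0).1 i).2
      have hge : Q.c i + Q.len ≤ x i := by
        have htt : Tendsto (fun m : ℕ => Q.c i + Q.len - 2/((m:ℝ)+1)) atTop
            (𝓝 (Q.c i + Q.len - 0)) := by
          apply tendsto_const_nhds.sub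
          have := one_div_succ_tendsto.const_mul (2:ℝ)
          simpa [mul_comm, div_eq_mul_inv, one_div, mul_assoc] using this
        rw [sub_zero] at htt
        exact le_of_tendsto htt (Eventually.of_forall fun m => (hxall m).2)
      linarith
    have hQfin : μ Q.set < ∞ := by
      refine lt_of_le_of_lt (measure_mono ?_)
        ((isCompact_Icc (a := Q.c) (b := fun i => Q.c i + Q.len)).measure_lt_top)
      intro x hx
      exact ⟨fun i => (hx i).1, fun i => (hx i).2.le⟩
    have hStend : ∀ i, Tendsto (fun m => μ (S i m)) atTop (𝓝 0) := by
      intro i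
      have := tendsto_measure_iInter_atTop (μ := μ)
        (fun m => (hSmeas i m).nullMeasurableSet) (hSanti i)
        ⟨0, ((lt_of_le_of_lt (measure_mono Set.inter_subset_left) hQfin)).ne⟩
      rw [hSempty i] at this
      simpa [Function.comp_def] using this
    have hsub : ∀ m, Q.set \ W m ⊆ ⋃ i, S i m := by
      intro m x hx
      obtain ⟨hxQ, hxW⟩ := hx
      simp only [hW, Set.mem_setOf_eq, not_forall] at hxW
      obtain ⟨i, hi⟩ := hxW
      rw [not_and_or] at hi
      rcases hi with hi | hi
      · push_neg at hi
        exfalso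
        have h1 := (hxQ i).1
        have h2 := hcq2 m i
        linarith
      · push_neg at hi
        refine Set.mem_iUnion.mpr ⟨i, hxQ, ?_⟩
        simp only [Set.mem_preimage, Set.mem_Ici]
        have e1 := hcq1 m i
        have e2 := hLq1 m
        have e3 : min (1/((m:ℝ)+1)) (Q.len/2) ≤ 1/((m:ℝ)+1) := min_le_left _ _
        have : 2/((m:ℝ)+1) = 1/((m:ℝ)+1) + 1/((m:ℝ)+1) := by ring
        linarith
    apply tendsto_of_tendsto_of_tendsto_of_le_of_le (g := fun _ => (0:ℝ≥0∞))
      (h := fun m => ∑ i, μ (S i m))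
    · exact tendsto_const_nhds
    · have : Tendsto (fun m => ∑ i : Fin d, μ (S i m)) atTop (𝓝 (∑ _i : Fin d, 0)) :=
        tendsto_finset_sum _ (fun i _ => hStend i)
      simpa using this
    · exact fun m => zero_le
    · exact fun m => le_trans (measure_mono (hsub m)) (measure_iUnion_fintype_le _ _)

lemma Cube.measure_lt_top' {d : ℕ} (Q : Cube d) (μ : Measure (Fin d → ℝ))
    [IsLocallyFiniteMeasure μ] : μ Q.set < ∞ := by
  refine lt_of_le_of_lt (measure_mono ?_)
    ((isCompact_Icc (a := Q.c) (b := fun i => Q.c i + Q.len)).measure_lt_top)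
  intro x hx
  exact ⟨fun i => (hx i).1, fun i => (hx i).2.le⟩

section Simple
variable {d : ℕ} {E : Type*} [NormedAddCommGroup E] [Lattice E] [HasSolidNorm E] [IsOrderedAddMonoid E] [NormedSpace ℝ E] [CompleteSpace E]
  {μ : Measure (Fin d → ℝ)} {n : ℕ} {e : Fin n → E} {A : Fin n → Set (Fin d → ℝ)}

lemma abs_sum_indicator (hAdisj : ∀ j k, j ≠ k → Disjoint (A j) (A k)) (y : Fin d → ℝ) :
    |∑ k, (A k).indicator (fun _ => e k) y| = ∑ k, (A k).indicator (fun _ => |e k|) y := by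
  by_cases hy : ∃ k, y ∈ A k
  · obtain ⟨k0, hk0⟩ := hy
    have hothers : ∀ k, k ≠ k0 → y ∉ A k := fun k hk h =>
      Set.disjoint_left.mp (hAdisj k k0 hk) h hk0
    have h1 : ∑ k, (A k).indicator (fun _ => e k) y = e k0 := by
      rw [Finset.sum_eq_single k0]
      · simp [Set.indicator_of_mem hk0]
      · intro k _ hk; simp [Set.indicator_of_notMem (hothers k hk)]
      · intro h; exact absurd (Finset.mem_univ k0) h
    have h2 : ∑ k, (A k).indicator (fun _ => |e k|) y = |e k0| := by
      rw [Finset.sum_eq_single k0]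
      · simp [Set.indicator_of_mem hk0]
      · intro k _ hk; simp [Set.indicator_of_notMem (hothers k hk)]
      · intro h; exact absurd (Finset.mem_univ k0) h
    rw [h1, h2]
  · push_neg at hy
    have h1 : ∀ k, (A k).indicator (fun _ => e k) y = 0 := fun k =>
      Set.indicator_of_notMem (hy k) _
    have h2 : ∀ k, (A k).indicator (fun _ => |e k|) y = 0 := fun k =>
      Set.indicator_of_notMem (hy k) _
    simp [h1, h2, abs_zero]

lemma setIntegral_abs_simple (hA : ∀ k, MeasurableSet (A k)) (hAfin : ∀ k, μ (A k) < ∞)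
    (hAdisj : ∀ j k, j ≠ k → Disjoint (A j) (A k))
    {f : (Fin d → ℝ) → E} (hf : f = fun x => ∑ k, (A k).indicator (fun _ => e k) x)
    {S : Set (Fin d → ℝ)} (hS : MeasurableSet S) :
    ∫ y in S, |f y| ∂μ = ∑ k, (μ (A k ∩ S)).toReal • |e k| := by
  have habs : (fun y => |f y|) = fun y => ∑ k, (A k).indicator (fun _ => |e k|) y := by
    funext y; rw [hf]; exact abs_sum_indicator hAdisj y
  rw [habs]
  rw [integral_finset_sum]
  · congr 1
    funext k
    rw [integral_indicator_const _ (hA k), measureReal_restrict_apply (hA k), Measure.real]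
  · intro k _
    rw [integrable_indicator_iff (hA k)]
    refine integrableOn_const ?_
    exact (lt_of_le_of_lt (Measure.restrict_le_self _) (hAfin k)).ne

end Simple

noncomputable def ratCube {d : ℕ} (p : (Fin d → ℚ) × ℚ) : Cube d where
  c := fun i => (p.1 i : ℝ)
  len := if 0 < p.2 then (p.2 : ℝ) else 1
  len_pos := by
    split_ifs with h
    · exact_mod_cast h
    · norm_num

lemma ratCube_set_of_pos {d : ℕ} {p : (Fin d → ℚ) × ℚ} (hp : 0 < p.2) :
    (ratCube p).set = {x : Fin d → ℝ | ∀ i, (p.1 i : ℝ) ≤ x i ∧ x i < (p.1 i : ℝ) + (p.2 : ℝ)} := by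
  simp only [ratCube, Cube.set, if_pos hp]

/-- Lemma 5.1 / `lemma:welldefmaximal`.
For an order-continuous Banach lattice `E` and a locally finite Borel measure `μ`, the
non-dyadic lattice Hardy–Littlewood maximal function of a simple function `f` exists
(as the least upper bound, in the μ-a.e. order, of the family `x ↦ ⟨|f|⟩^μ_Q 1_Q(x)` over
all axis-parallel cubes `Q`) and is strongly `μ`-measurable. -/
theorem latticeMaximal_welldefined_of_simple
    {d : ℕ} (hd : 1 ≤ d)
    (E : Type*) [NormedAddCommGroup E] [Lattice E] [HasSolidNorm E] [IsOrderedAddMonoid E] [NormedSpace ℝ E] [CompleteSpace E]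
    (hOC : IsOrderContinuous E)
    (μ : Measure (Fin d → ℝ)) [IsLocallyFiniteMeasure μ]
    (f : (Fin d → ℝ) → E) (n : ℕ) (e : Fin n → E) (A : Fin n → Set (Fin d → ℝ))
    (hA : ∀ k, MeasurableSet (A k)) (hAfin : ∀ k, μ (A k) < ∞)
    (hAdisj : ∀ j k, j ≠ k → Disjoint (A j) (A k))
    (hf : f = fun x => ∑ k, (A k).indicator (fun _ => e k) x) :
    ∃ g : (Fin d → ℝ) → E, AEStronglyMeasurable g μ ∧
      (∀ Q : Cube d, ∀ᵐ x ∂μ,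
        Set.indicator Q.set (fun _ => avg μ Q.set fun y => |f y|) x ≤ g x) ∧
      ∀ h : (Fin d → ℝ) → E, AEStronglyMeasurable h μ →
        (∀ Q : Cube d, ∀ᵐ x ∂μ,
          Set.indicator Q.set (fun _ => avg μ Q.set fun y => |f y|) x ≤ h x) →
        ∀ᵐ x ∂μ, g x ≤ h x := by
  classical
  obtain ⟨φ, hφ⟩ := exists_surjective_nat ((Fin d → ℚ) × ℚ)
  set F : ℕ → (Fin d → ℝ) → E := fun j =>
    Set.indicator (ratCube (φ j)).set
      (fun _ => avg μ (ratCube (φ j)).set fun y => |f y|) with hFdef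
  set u : E := ∑ k, |e k| with hu
  have hu0 : (0 : E) ≤ u := Finset.sum_nonneg fun k _ => abs_nonneg _
  have havg_formula : ∀ S : Set (Fin d → ℝ), MeasurableSet S →
      avg μ S (fun y => |f y|) =
        ∑ k, (((μ S).toReal)⁻¹ * (μ (A k ∩ S)).toReal) • |e k| := by
    intro S hS
    unfold avg
    rw [setIntegral_abs_simple hA hAfin hAdisj hf hS, Finset.smul_sum]
    congr 1
    funext k
    rw [smul_smul]
  have havg_nonneg : ∀ S : Set (Fin d → ℝ), MeasurableSet S →
      (0:E) ≤ avg μ S (fun y => |f y|) := by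
    intro S hS
    rw [havg_formula S hS]
    refine Finset.sum_nonneg fun k _ => real_smul_nonneg ?_ (abs_nonneg _)
    positivity
  have havg_le_u : ∀ S : Set (Fin d → ℝ), MeasurableSet S → μ S ≠ ∞ →
      avg μ S (fun y => |f y|) ≤ u := by
    intro S hS hSfin
    rw [havg_formula S hS, hu]
    refine Finset.sum_le_sum fun k _ => ?_
    have hcoef : ((μ S).toReal)⁻¹ * (μ (A k ∩ S)).toReal ≤ 1 := by
      by_cases h0 : μ S = 0
      · have : μ (A k ∩ S) = 0 :=
          le_antisymm (le_trans (measure_mono Set.inter_subset_right) h0.le) zero_le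
        simp [this]
      · have hpos : 0 < (μ S).toReal := ENNReal.toReal_pos h0 hSfin
        have hle : (μ (A k ∩ S)).toReal ≤ (μ S).toReal :=
          ENNReal.toReal_mono hSfin (measure_mono Set.inter_subset_right)
        calc ((μ S).toReal)⁻¹ * (μ (A k ∩ S)).toReal
            ≤ ((μ S).toReal)⁻¹ * (μ S).toReal := by
              exact mul_le_mul_of_nonneg_left hle (by positivity)
        _ = 1 := inv_mul_cancel₀ hpos.ne'
    calc (((μ S).toReal)⁻¹ * (μ (A k ∩ S)).toReal) • |e k| ≤ (1:ℝ) • |e k| :=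
          real_smul_le_smul_right hcoef (abs_nonneg _)
    _ = |e k| := one_smul _ _
  have hF_nonneg : ∀ j x, (0:E) ≤ F j x := by
    intro j x
    simp only [hFdef]
    by_cases hx : x ∈ (ratCube (φ j)).set
    · rw [Set.indicator_of_mem hx]
      exact havg_nonneg _ (Cube.measurableSet' _)
    · rw [Set.indicator_of_notMem hx]
  have hF_le : ∀ j x, F j x ≤ u := by
    intro j x
    simp only [hFdef]
    by_cases hx : x ∈ (ratCube (φ j)).set
    · rw [Set.indicator_of_mem hx]
      exact havg_le_u _ (Cube.measurableSet' _) (Cube.measure_lt_top' _ μ).ne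
    · rw [Set.indicator_of_notMem hx]
      exact hu0
  have hbdd : ∀ x m, partialSups (fun j => F j x) m ≤ u :=
    fun x m => partialSups_le _ m u fun j _ => hF_le j x
  have htends : ∀ x, ∃ l, Tendsto (fun m => partialSups (fun j => F j x) m)
      atTop (𝓝 l) := fun x =>
    tendsto_of_monotone_of_bounded hOC (partialSups (fun j => F j x)).monotone (hbdd x)
  choose g hg using htends
  have hge : ∀ x m, partialSups (fun j => F j x) m ≤ g x := by
    intro x m
    refine ge_of_tendsto (hg x) ?_
    filter_upwards [eventually_ge_atTop m] with m' hm'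
    exact (partialSups (fun j => F j x)).monotone hm'
  have hFg : ∀ x j, F j x ≤ g x :=
    fun x j => le_trans (le_partialSups (fun j => F j x) j) (hge x j)
  have hg0 : ∀ x, (0:E) ≤ g x := fun x => le_trans (hF_nonneg 0 x) (hFg x 0)
  refine ⟨g, ?_, ?_, ?_⟩
  · -- strong measurability
    have hsm : ∀ m, StronglyMeasurable (fun x => partialSups (fun j => F j x) m) := by
      intro m
      induction m with
      | zero =>
          simp only [partialSups_zero]
          exact stronglyMeasurable_const.indicator (Cube.measurableSet' _)
      | succ m ih =>
          have : (fun x => partialSups (fun j => F j x) (m+1)) =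
              fun x => partialSups (fun j => F j x) m ⊔ F (m+1) x := by
            funext x
            exact partialSups_succ _ _
          rw [this]
          exact ih.sup (stronglyMeasurable_const.indicator (Cube.measurableSet' _))
    have : StronglyMeasurable g :=
      stronglyMeasurable_of_tendsto atTop hsm (tendsto_pi_nhds.mpr hg)
    exact this.aestronglyMeasurable
  · -- upper bound for every cube
    intro Q
    refine Filter.Eventually.of_forall fun x => ?_
    by_cases hxQ : x ∈ Q.set
    swap
    · rw [Set.indicator_of_notMem hxQ]
      exact hg0 x
    rw [Set.indicator_of_mem hxQ]
    by_cases hQ0 : μ Q.set = 0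
    · have : avg μ Q.set (fun y => |f y|) = 0 := by
        unfold avg
        rw [hQ0]
        simp
      rw [this]
      exact hg0 x
    · obtain ⟨cq, Lq, hLqpos, hev, ht1, ht2⟩ := cube_rat_approx μ Q
      set Wm : ℕ → Set (Fin d → ℝ) := fun m =>
        {x | ∀ i, (cq m i : ℝ) ≤ x i ∧ x i < (cq m i : ℝ) + (Lq m : ℝ)} with hWm
      have hjex : ∀ m, ∃ j, (ratCube (φ j)).set = Wm m := by
        intro m
        obtain ⟨j, hj⟩ := hφ (cq m, Lq m)
        refine ⟨j, ?_⟩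
        rw [hj, ratCube_set_of_pos (hLqpos m)]
      choose jf hjf using hjex
      have hWmeas : ∀ m, MeasurableSet (Wm m) :=
        fun m => hjf m ▸ Cube.measurableSet' _
      have hWfin : ∀ m, μ (Wm m) ≠ ∞ :=
        fun m => hjf m ▸ (Cube.measure_lt_top' _ μ).ne
      have hQfin : μ Q.set ≠ ∞ := (Cube.measure_lt_top' Q μ).ne
      have hconv := measure_inter_tendsto μ hWfin hQfin ht1 ht2
      have hμW : Tendsto (fun m => (μ (Wm m)).toReal) atTop (𝓝 ((μ Q.set).toReal)) := by
        have := hconv Set.univ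
        simpa [Set.univ_inter] using this
      have hQrpos : 0 < (μ Q.set).toReal := ENNReal.toReal_pos hQ0 hQfin
      have havgW : Tendsto (fun m => avg μ (Wm m) (fun y => |f y|)) atTop
          (𝓝 (avg μ Q.set (fun y => |f y|))) := by
        have hform : ∀ m, avg μ (Wm m) (fun y => |f y|) =
            ∑ k, (((μ (Wm m)).toReal)⁻¹ * (μ (A k ∩ Wm m)).toReal) • |e k| :=
          fun m => havg_formula _ (hWmeas m)
        rw [havg_formula _ (Cube.measurableSet' Q)]
        refine Tendsto.congr (fun m => (hform m).symm) ?_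
        refine tendsto_finset_sum _ fun k _ => ?_
        refine Tendsto.smul_const ?_ _
        exact Tendsto.mul (Tendsto.inv₀ hμW hQrpos.ne') (hconv (A k))
      refine le_of_tendsto havgW ?_
      filter_upwards [hev x hxQ] with m hm
      have hxW : x ∈ Wm m := hm
      have : avg μ (Wm m) (fun y => |f y|) = F (jf m) x := by
        simp only [hFdef]
        rw [hjf m, Set.indicator_of_mem hxW]
      rw [this]
      exact hFg x (jf m)
  · -- least upper bound
    intro h hmeas hub
    have hae : ∀ᵐ x ∂μ, ∀ j, F j x ≤ h x :=
      (ae_all_iff).mpr fun j => hub (ratCube (φ j))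
    filter_upwards [hae] with x hx
    refine le_of_tendsto (hg x) (Filter.Eventually.of_forall fun m => ?_)
    exact partialSups_le _ m _ fun j _ => hx j
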